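/- Let K be a field, k ≥ 1, let φ be a system of formal power series with φ₀ = 0 and invertible linear part φ₁, and let u be a system that is homogeneous of degree k+1. Then for every m ≥ 1, the degree-(k+1) homogeneous component of the m-fold composition of φ + u satisfies ((φ+u)^m)_{k+1} = (φ^m)_{k+1} + Σ_{i=0}^{m−1} φ₁^i∘u∘φ₁^{m−1−i}, where φ₁^i denotes the i-fold composition of the linear system φ₁ (with φ₁^0 = id) and ∘ denotes composition of systems. -/

import Mathlib

noncomputable section

open MvPowerSeries

/-- A system of `n` formal power series in the `n` variables `x₁, …, xₙ` over `K`. -/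
abbrev Sys (n : ℕ) (K : Type) [Field K] := Fin n → MvPowerSeries (Fin n) K

variable {n : ℕ} {K : Type} [Field K]

/-- The degree-`k` homogeneous component `φ_k` of a system `φ`. -/
def homC (k : ℕ) (φ : Sys n K) : Sys n K :=
  fun i => (fun e => if (e.sum fun _ x => x) = k then MvPowerSeries.coeff e (φ i) else 0 :
    MvPowerSeries (Fin n) K)

/-- The truncation `φ_{≤ m}` of a system `φ` to total degrees `≤ m`. -/
def truncLE (m : ℕ) (φ : Sys n K) : Sys n K :=
  fun i => (fun e => if (e.sum fun _ x => x) ≤ m then MvPowerSeries.coeff e (φ i) else 0 :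
    MvPowerSeries (Fin n) K)

/-- Composition (substitution) `φ ∘ ψ` of systems of formal power series.  The coefficient of a
monomial `e` in `φ ∘ ψ` is computed by substituting `ψ` into a sufficiently large polynomial
truncation of `φ`; this agrees with the usual substitution whenever `ψ` has zero constant term. -/
def comp (φ ψ : Sys n K) : Sys n K :=
  fun i => (fun e =>
    MvPowerSeries.coeff e
      (MvPolynomial.eval₂ (MvPowerSeries.C (σ := Fin n) (R := K)) ψ
        (MvPowerSeries.trunc K
          (Finsupp.equivFunOnFinite.symm fun _ => (e.sum fun _ x => x) + 1) (φ i))) :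
    MvPowerSeries (Fin n) K)

/-- The identity system `id = (x₁, …, xₙ)`. -/
def idSys : Sys n K := fun i => MvPowerSeries.X i

/-- The `m`-fold composition `φ^m` of a system with itself (`φ^0 = id`). -/
def iterComp (φ : Sys n K) : ℕ → Sys n K
  | 0 => idSys
  | m + 1 => comp (iterComp φ m) φ

/-- The Jacobian matrix of a system, i.e. its linear part viewed as a matrix. -/
def jac (φ : Sys n K) : Matrix (Fin n) (Fin n) K :=
  fun i j => MvPowerSeries.coeff (Finsupp.single j 1) (φ i)

/-- The linear system of power series attached to a matrix `A`. -/
def ofMatrix (A : Matrix (Fin n) (Fin n) K) : Sys n K :=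
  fun i => ∑ j, MvPowerSeries.C (σ := Fin n) (R := K) (A i j) * MvPowerSeries.X j


/-- total degree of an exponent -/
def deg (e : Fin n →₀ ℕ) : ℕ := e.sum fun _ x => x

lemma deg_add (p q : Fin n →₀ ℕ) : deg (p + q) = deg p + deg q := by
  simpa [deg] using Finsupp.sum_add_index' (by simp) (by intros; rfl)

lemma deg_zero : deg (0 : Fin n →₀ ℕ) = 0 := by simp [deg]

lemma apply_le_deg (e : Fin n →₀ ℕ) (j : Fin n) : e j ≤ deg e := by
  by_cases hj : j ∈ e.support
  · exact Finset.single_le_sum (f := fun j => e j) (by intros; positivity) hj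
  · simp [Finsupp.notMem_support_iff.1 hj]

lemma deg_eq_zero_iff (e : Fin n →₀ ℕ) : deg e = 0 ↔ e = 0 := by
  constructor
  · intro h
    ext j
    simp only [Finsupp.coe_zero, Pi.zero_apply]
    have := apply_le_deg e j
    omega
  · rintro rfl; simp [deg]

lemma deg_single (j : Fin n) (s : ℕ) : deg (Finsupp.single j s) = s := by
  simp [deg, Finsupp.sum_single_index]

lemma exists_single_of_deg_one {d : Fin n →₀ ℕ} (h : deg d = 1) :
    ∃ j, d = Finsupp.single j 1 := by
  have hne : d.support.Nonempty := by
    rw [Finset.nonempty_iff_ne_empty]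
    intro hsupp
    have : d = 0 := Finsupp.support_eq_empty.1 hsupp
    subst this
    rw [deg_zero] at h
    omega
  obtain ⟨j, hj⟩ := hne
  have hdj1 : 1 ≤ d j := Nat.one_le_iff_ne_zero.2 (Finsupp.mem_support_iff.1 hj)
  have hsum : d j + ∑ j' ∈ d.support.erase j, d j' = deg d := Finset.add_sum_erase _ _ hj
  refine ⟨j, ?_⟩
  ext j'
  rcases eq_or_ne j' j with rfl | hj'
  · have := apply_le_deg d j'
    rw [Finsupp.single_eq_same]
    omega
  · rw [Finsupp.single_eq_of_ne' (Ne.symm hj')]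
    by_cases hmem : j' ∈ d.support
    · have h0 : ∑ j'' ∈ d.support.erase j, d j'' = 0 := by omega
      have := Finset.sum_eq_zero_iff.1 h0 j' (Finset.mem_erase.2 ⟨hj', hmem⟩)
      exact this
    · exact Finsupp.notMem_support_iff.1 hmem

/-- the finset of exponents of total degree at most `M` -/
def DF (n M : ℕ) : Finset (Fin n →₀ ℕ) :=
  (Finset.Iic (Finsupp.equivFunOnFinite.symm fun _ => M)).filter (fun d => deg d ≤ M)

lemma mem_DF {M : ℕ} {d : Fin n →₀ ℕ} : d ∈ DF n M ↔ deg d ≤ M := by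
  simp only [DF, Finset.mem_filter, Finset.mem_Iic, and_iff_right_iff_imp]
  intro h
  intro j
  simpa using (apply_le_deg d j).trans h

lemma DF_mono {M M' : ℕ} (h : M ≤ M') : DF n M ⊆ DF n M' := by
  intro d hd; rw [mem_DF] at *; omega

/-- `∏ⱼ ψⱼ ^ dⱼ` -/
def pprod (ψ : Sys n K) (d : Fin n →₀ ℕ) : MvPowerSeries (Fin n) K :=
  d.prod fun j s => ψ j ^ s

/-- `f` has all terms of degree `≥ s` -/
def OrdGE (s : ℕ) (f : MvPowerSeries (Fin n) K) : Prop :=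
  ∀ e : Fin n →₀ ℕ, deg e < s → MvPowerSeries.coeff e f = 0

/-- `f` is concentrated in degree `s` -/
def SuppDeg (s : ℕ) (f : MvPowerSeries (Fin n) K) : Prop :=
  ∀ e : Fin n →₀ ℕ, deg e ≠ s → MvPowerSeries.coeff e f = 0

lemma SuppDeg.ordGE {s : ℕ} {f : MvPowerSeries (Fin n) K} (h : SuppDeg s f) : OrdGE s f :=
  fun e he => h e (by omega)

lemma OrdGE.mono {s t : ℕ} {f : MvPowerSeries (Fin n) K} (h : OrdGE s f) (hts : t ≤ s) :
    OrdGE t f := fun e he => h e (by omega)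

lemma OrdGE.mul {s t : ℕ} {f g : MvPowerSeries (Fin n) K} (hf : OrdGE s f) (hg : OrdGE t g) :
    OrdGE (s + t) (f * g) := by
  intro e he
  rw [MvPowerSeries.coeff_mul]
  apply Finset.sum_eq_zero
  rintro ⟨p, q⟩ hpq
  rw [Finset.HasAntidiagonal.mem_antidiagonal] at hpq
  have hdeg : deg p + deg q = deg e := by rw [← deg_add, hpq]
  rcases lt_or_ge (deg p) s with hp | hp
  · simp [hf p hp]
  · have : deg q < t := by omega
    simp [hg q this]

lemma OrdGE.add {s : ℕ} {f g : MvPowerSeries (Fin n) K} (hf : OrdGE s f) (hg : OrdGE s g) :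
    OrdGE s (f + g) := by
  intro e he; rw [map_add, hf e he, hg e he, add_zero]

lemma OrdGE.one : OrdGE 0 (1 : MvPowerSeries (Fin n) K) := by intro e he; omega

lemma OrdGE.pow {s : ℕ} {f : MvPowerSeries (Fin n) K} (hf : OrdGE s f) (m : ℕ) :
    OrdGE (s * m) (f ^ m) := by
  induction m with
  | zero => simpa using OrdGE.one
  | succ m ih =>
    rw [pow_succ, mul_add, mul_one]
    exact ih.mul hf

lemma OrdGE.of_constantCoeff {f : MvPowerSeries (Fin n) K}
    (h : MvPowerSeries.constantCoeff (σ := Fin n) (R := K) f = 0) : OrdGE 1 f := by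
  intro e he
  have : e = 0 := by rw [← deg_eq_zero_iff]; omega
  subst this
  simpa [MvPowerSeries.coeff_zero_eq_constantCoeff] using h

lemma ordGE_pprod {ψ : Sys n K} (hψ : ∀ j, MvPowerSeries.constantCoeff (σ := Fin n) (R := K) (ψ j) = 0)
    (d : Fin n →₀ ℕ) : OrdGE (deg d) (pprod ψ d) := by
  unfold pprod Finsupp.prod deg Finsupp.sum
  induction d.support using Finset.cons_induction with
  | empty => simpa using OrdGE.one
  | cons j s hj ih =>
    rw [Finset.sum_cons, Finset.prod_cons]
    exact ((OrdGE.of_constantCoeff (hψ j)).pow (d j)).mul ih |>.mono (by nlinarith)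

lemma SuppDeg.mul {s t : ℕ} {f g : MvPowerSeries (Fin n) K} (hf : SuppDeg s f) (hg : SuppDeg t g) :
    SuppDeg (s + t) (f * g) := by
  intro e he
  rw [MvPowerSeries.coeff_mul]
  apply Finset.sum_eq_zero
  rintro ⟨p, q⟩ hpq
  rw [Finset.HasAntidiagonal.mem_antidiagonal] at hpq
  have hdeg : deg p + deg q = deg e := by rw [← deg_add, hpq]
  rcases eq_or_ne (deg p) s with hp | hp
  · have : deg q ≠ t := by omega
    simp [hg q this]
  · simp [hf p hp]

lemma SuppDeg.one : SuppDeg 0 (1 : MvPowerSeries (Fin n) K) := by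
  intro e he
  rw [MvPowerSeries.coeff_one, if_neg]
  rintro rfl; simp [deg_zero] at he

lemma SuppDeg.pow {s : ℕ} {f : MvPowerSeries (Fin n) K} (hf : SuppDeg s f) (m : ℕ) :
    SuppDeg (s * m) (f ^ m) := by
  induction m with
  | zero => simpa using SuppDeg.one
  | succ m ih =>
    rw [pow_succ, mul_add, mul_one]
    exact ih.mul hf

lemma suppDeg_pprod {c : ℕ} {ψ : Sys n K} (hψ : ∀ j, SuppDeg c (ψ j)) (d : Fin n →₀ ℕ) :
    SuppDeg (c * deg d) (pprod ψ d) := by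
  unfold pprod Finsupp.prod deg Finsupp.sum
  rw [Finset.mul_sum]
  induction d.support using Finset.cons_induction with
  | empty => simpa using SuppDeg.one
  | cons j s hj ih =>
    rw [Finset.sum_cons, Finset.prod_cons]
    exact ((hψ j).pow (d j)).mul ih

lemma SuppDeg.X (j : Fin n) : SuppDeg 1 (MvPowerSeries.X j : MvPowerSeries (Fin n) K) := by
  intro e he
  rw [MvPowerSeries.coeff_X, if_neg]
  rintro rfl; simp [deg_single] at he

/-- abstract substitution operator defined via the master coefficient formula -/
def cs (ψ : Sys n K) (g : MvPowerSeries (Fin n) K) : MvPowerSeries (Fin n) K :=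
  fun e => ∑ d ∈ DF n (deg e), MvPowerSeries.coeff d g * MvPowerSeries.coeff e (pprod ψ d)

lemma coeff_cs (ψ : Sys n K) (g : MvPowerSeries (Fin n) K) (e : Fin n →₀ ℕ) :
    MvPowerSeries.coeff e (cs ψ g) =
      ∑ d ∈ DF n (deg e), MvPowerSeries.coeff d g * MvPowerSeries.coeff e (pprod ψ d) := rfl

/-- The master formula: `comp` agrees with `cs` when the inner system has zero constant terms. -/
lemma comp_eq_cs {φ ψ : Sys n K}
    (hψ : ∀ j, MvPowerSeries.constantCoeff (σ := Fin n) (R := K) (ψ j) = 0) (i : Fin n) :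
    comp φ ψ i = cs ψ (φ i) := by
  funext e
  show MvPowerSeries.coeff e
      (MvPolynomial.eval₂ (MvPowerSeries.C (σ := Fin n) (R := K)) ψ
        (MvPowerSeries.trunc K (Finsupp.equivFunOnFinite.symm fun _ => deg e + 1) (φ i)))
      = cs ψ (φ i) e
  set N : Fin n →₀ ℕ := Finsupp.equivFunOnFinite.symm fun _ => deg e + 1 with hN
  have hNval : ∀ j, N j = deg e + 1 := fun j => rfl
  set p := MvPowerSeries.trunc K N (φ i) with hp
  rw [MvPolynomial.eval₂_eq, map_sum]
  have hterm : ∀ d ∈ p.support, MvPowerSeries.coeff e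
      (MvPowerSeries.C (σ := Fin n) (R := K) (p.coeff d) * ∏ j ∈ d.support, ψ j ^ d j)
      = MvPowerSeries.coeff d (φ i) * MvPowerSeries.coeff e (pprod ψ d) := by
    intro d hd
    have hdN : d < N := by
      by_contra hdN
      have := MvPolynomial.mem_support_iff.1 hd
      rw [hp, MvPowerSeries.coeff_trunc, if_neg hdN] at this
      exact this rfl
    rw [MvPowerSeries.coeff_C_mul, hp, MvPowerSeries.coeff_trunc, if_pos hdN]
    rfl
  rw [Finset.sum_congr rfl hterm]
  -- now compare the index sets
  rw [show cs ψ (φ i) e = ∑ d ∈ DF n (deg e),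
    MvPowerSeries.coeff d (φ i) * MvPowerSeries.coeff e (pprod ψ d) from rfl]
  set t : (Fin n →₀ ℕ) → K :=
    fun d => MvPowerSeries.coeff d (φ i) * MvPowerSeries.coeff e (pprod ψ d) with ht
  have h1 : ∑ d ∈ p.support, t d = ∑ d ∈ p.support ∩ DF n (deg e), t d := by
    refine (Finset.sum_subset Finset.inter_subset_left ?_).symm
    intro d hd hnd
    have hdd : deg e < deg d := by
      by_contra h
      exact hnd (Finset.mem_inter.2 ⟨hd, mem_DF.2 (by omega)⟩)
    rw [ht]; dsimp only
    rw [ordGE_pprod hψ d e hdd, mul_zero]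
  have h2 : ∑ d ∈ p.support ∩ DF n (deg e), t d = ∑ d ∈ DF n (deg e), t d := by
    refine Finset.sum_subset Finset.inter_subset_right ?_
    intro d hd hnd
    have hds : d ∉ p.support := fun h => hnd (Finset.mem_inter.2 ⟨h, hd⟩)
    have hdN : d < N := by
      have hle : d ≤ N := by
        intro j
        have := apply_le_deg d j
        have hd' := mem_DF.1 hd
        have := hNval j
        omega
      refine lt_of_le_of_ne hle ?_
      intro h
      have hdi : d i = N i := by rw [h]
      have h2 := apply_le_deg d i
      have hd' := mem_DF.1 hd
      have := hNval i
      omega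
    have : MvPowerSeries.coeff d (φ i) = 0 := by
      have := MvPolynomial.notMem_support_iff.1 hds
      rwa [hp, MvPowerSeries.coeff_trunc, if_pos hdN] at this
    rw [ht]; dsimp only
    rw [this, zero_mul]
  rw [h1, h2]


lemma pprod_add (ψ : Sys n K) (p q : Fin n →₀ ℕ) :
    pprod ψ (p + q) = pprod ψ p * pprod ψ q := by
  unfold pprod
  rw [Finsupp.prod_add_index (by intros; exact pow_zero _) (by intros; exact pow_add _ _ _)]

lemma pprod_zero (ψ : Sys n K) : pprod ψ 0 = 1 := by simp [pprod]

lemma pprod_single (ψ : Sys n K) (j : Fin n) : pprod ψ (Finsupp.single j 1) = ψ j := by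
  unfold pprod
  rw [Finsupp.prod_single_index (by exact pow_zero _), pow_one]

lemma cs_add (ψ : Sys n K) (f g : MvPowerSeries (Fin n) K) :
    cs ψ (f + g) = cs ψ f + cs ψ g := by
  apply MvPowerSeries.ext; intro e
  rw [map_add, coeff_cs, coeff_cs, coeff_cs, ← Finset.sum_add_distrib]
  refine Finset.sum_congr rfl fun d _ => ?_
  rw [map_add, add_mul]

lemma cs_zero (ψ : Sys n K) : cs ψ 0 = 0 := by
  apply MvPowerSeries.ext; intro e
  rw [coeff_cs]
  simp

lemma cs_one (ψ : Sys n K) : cs ψ 1 = 1 := by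
  apply MvPowerSeries.ext; intro e
  rw [coeff_cs]
  rw [Finset.sum_eq_single (0 : Fin n →₀ ℕ)]
  · rw [pprod_zero, MvPowerSeries.coeff_one, MvPowerSeries.coeff_one, if_pos rfl, one_mul]
  · intro d _ hd
    rw [MvPowerSeries.coeff_one, if_neg hd, zero_mul]
  · intro h
    exact absurd (mem_DF.2 (by rw [deg_zero]; omega)) h

lemma cs_mul {ψ : Sys n K} (hψ : ∀ j, MvPowerSeries.constantCoeff (σ := Fin n) (R := K) (ψ j) = 0)
    (f g : MvPowerSeries (Fin n) K) : cs ψ (f * g) = cs ψ f * cs ψ g := by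
  apply MvPowerSeries.ext; intro e
  set M := deg e with hM
  set F : (Fin n →₀ ℕ) × (Fin n →₀ ℕ) → K := fun x =>
    MvPowerSeries.coeff x.1 f * MvPowerSeries.coeff x.2 g *
      MvPowerSeries.coeff e (pprod ψ x.1 * pprod ψ x.2) with hF
  have hTL : MvPowerSeries.coeff e (cs ψ (f * g)) = ∑ x ∈ DF n M ×ˢ DF n M, F x := by
    rw [coeff_cs]
    have step1 : ∀ d ∈ DF n M,
        MvPowerSeries.coeff d (f * g) * MvPowerSeries.coeff e (pprod ψ d)
          = ∑ x ∈ Finset.HasAntidiagonal.antidiagonal d, F x := by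
      intro d _
      rw [MvPowerSeries.coeff_mul, Finset.sum_mul]
      refine Finset.sum_congr rfl fun x hx => ?_
      rw [Finset.HasAntidiagonal.mem_antidiagonal] at hx
      rw [hF]; dsimp only
      rw [← hx, pprod_add]
    rw [Finset.sum_congr rfl step1]
    have hdisj : (DF n M : Set ((Fin n) →₀ ℕ)).PairwiseDisjoint Finset.HasAntidiagonal.antidiagonal := by
      intro a _ b _ hab
      show Disjoint (Finset.HasAntidiagonal.antidiagonal a) (Finset.HasAntidiagonal.antidiagonal b)
      rw [Finset.disjoint_left]
      intro x hxa hxb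
      rw [Finset.HasAntidiagonal.mem_antidiagonal] at hxa hxb
      exact hab (hxa ▸ hxb)
    rw [← Finset.sum_biUnion hdisj]
    refine Finset.sum_subset ?_ ?_
    · intro x hx
      rw [Finset.mem_biUnion] at hx
      obtain ⟨d, hd, hxd⟩ := hx
      rw [Finset.HasAntidiagonal.mem_antidiagonal] at hxd
      have hdd := mem_DF.1 hd
      have : deg x.1 + deg x.2 = deg d := by rw [← deg_add, hxd]
      rw [Finset.mem_product]
      exact ⟨mem_DF.2 (by omega), mem_DF.2 (by omega)⟩
    · intro x hx hnx
      have hsum : ¬ deg (x.1 + x.2) ≤ M := by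
        intro h
        exact hnx (Finset.mem_biUnion.2 ⟨x.1 + x.2, mem_DF.2 h,
          Finset.HasAntidiagonal.mem_antidiagonal.2 rfl⟩)
      rw [deg_add] at hsum
      rw [hF]; dsimp only
      rw [(ordGE_pprod hψ x.1).mul (ordGE_pprod hψ x.2) e (by omega), mul_zero]
  rw [hTL, MvPowerSeries.coeff_mul]
  have step2 : ∀ x ∈ Finset.HasAntidiagonal.antidiagonal e,
      MvPowerSeries.coeff x.1 (cs ψ f) * MvPowerSeries.coeff x.2 (cs ψ g)
        = ∑ p ∈ DF n M, ∑ q ∈ DF n M,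
            MvPowerSeries.coeff p f * MvPowerSeries.coeff q g *
              (MvPowerSeries.coeff x.1 (pprod ψ p) *
                MvPowerSeries.coeff x.2 (pprod ψ q)) := by
    intro x hx
    rw [Finset.HasAntidiagonal.mem_antidiagonal] at hx
    have hdx : deg x.1 + deg x.2 = M := by rw [← deg_add, hx]
    have e1 : ∀ p ∈ DF n M, p ∉ DF n (deg x.1) →
        MvPowerSeries.coeff p f * MvPowerSeries.coeff x.1 (pprod ψ p) = 0 := by
      intro p _ hp
      have : deg x.1 < deg p := by
        by_contra h; push_neg at h; exact hp (mem_DF.2 (by omega))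
      rw [ordGE_pprod hψ p x.1 this, mul_zero]
    have e2 : ∀ q ∈ DF n M, q ∉ DF n (deg x.2) →
        MvPowerSeries.coeff q g * MvPowerSeries.coeff x.2 (pprod ψ q) = 0 := by
      intro q _ hq
      have : deg x.2 < deg q := by
        by_contra h; push_neg at h; exact hq (mem_DF.2 (by omega))
      rw [ordGE_pprod hψ q x.2 this, mul_zero]
    rw [coeff_cs, coeff_cs,
        Finset.sum_subset (DF_mono (show deg x.1 ≤ M by omega)) e1,
        Finset.sum_subset (DF_mono (show deg x.2 ≤ M by omega)) e2,
        Finset.sum_mul_sum]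
    exact Finset.sum_congr rfl fun p _ => Finset.sum_congr rfl fun q _ => by ring
  rw [Finset.sum_congr rfl step2, Finset.sum_product,
    Finset.sum_comm (s := Finset.HasAntidiagonal.antidiagonal e) (t := DF n M)]
  refine Finset.sum_congr rfl fun p _ => ?_
  rw [Finset.sum_comm (s := Finset.HasAntidiagonal.antidiagonal e) (t := DF n M)]
  refine Finset.sum_congr rfl fun q _ => ?_
  rw [hF]; dsimp only
  rw [MvPowerSeries.coeff_mul, Finset.mul_sum]


/-- `cs ψ` bundled as a ring homomorphism (inner system with zero constant terms). -/
def csHom (ψ : Sys n K) (hψ : ∀ j, MvPowerSeries.constantCoeff (σ := Fin n) (R := K) (ψ j) = 0) :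
    MvPowerSeries (Fin n) K →+* MvPowerSeries (Fin n) K where
  toFun := cs ψ
  map_one' := cs_one ψ
  map_mul' := cs_mul hψ
  map_zero' := cs_zero ψ
  map_add' := cs_add ψ

lemma cs_pprod {ψ : Sys n K} (hψ : ∀ j, MvPowerSeries.constantCoeff (σ := Fin n) (R := K) (ψ j) = 0)
    (B : Sys n K) (f : Fin n →₀ ℕ) :
    cs ψ (pprod B f) = pprod (fun j => cs ψ (B j)) f := by
  show csHom ψ hψ (pprod B f) = _
  unfold pprod Finsupp.prod
  rw [map_prod]
  exact Finset.prod_congr rfl fun j _ => map_pow _ _ _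

lemma cs_X {ψ : Sys n K} (hψ : ∀ j, MvPowerSeries.constantCoeff (σ := Fin n) (R := K) (ψ j) = 0)
    (j : Fin n) : cs ψ (MvPowerSeries.X j) = ψ j := by
  apply MvPowerSeries.ext; intro e
  rw [coeff_cs]
  rcases Nat.eq_zero_or_pos (deg e) with h0 | hpos
  · have he : e = 0 := (deg_eq_zero_iff e).1 h0
    rw [Finset.sum_eq_zero, he, MvPowerSeries.coeff_zero_eq_constantCoeff_apply, hψ j]
    intro d hd
    have hd0 : d = 0 := (deg_eq_zero_iff d).1 (by have := mem_DF.1 hd; omega)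
    subst hd0
    rw [MvPowerSeries.coeff_X, if_neg (by
      intro h
      exact one_ne_zero ((Finsupp.single_eq_zero).1 h.symm)), zero_mul]
  · rw [Finset.sum_eq_single (Finsupp.single j 1)]
    · rw [MvPowerSeries.coeff_X, if_pos rfl, one_mul, pprod_single]
    · intro d _ hd
      rw [MvPowerSeries.coeff_X, if_neg hd, zero_mul]
    · intro h
      exact absurd (mem_DF.2 (by rw [deg_single]; omega)) h

lemma coeff_zero_cs (ψ : Sys n K) (g : MvPowerSeries (Fin n) K) :
    MvPowerSeries.coeff 0 (cs ψ g) = MvPowerSeries.coeff 0 g := by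
  rw [coeff_cs]
  rw [Finset.sum_eq_single (0 : Fin n →₀ ℕ)]
  · rw [pprod_zero, MvPowerSeries.coeff_one, if_pos rfl, mul_one]
  · intro d hd hne
    exact absurd ((deg_eq_zero_iff d).1 (by have := mem_DF.1 hd; rw [deg_zero] at this; omega))
      hne
  · intro h
    exact absurd (mem_DF.2 (le_refl _)) h

lemma cs_assoc {B C : Sys n K}
    (hB : ∀ j, MvPowerSeries.constantCoeff (σ := Fin n) (R := K) (B j) = 0)
    (hC : ∀ j, MvPowerSeries.constantCoeff (σ := Fin n) (R := K) (C j) = 0)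
    (g : MvPowerSeries (Fin n) K) :
    cs C (cs B g) = cs (fun j => cs C (B j)) g := by
  apply MvPowerSeries.ext; intro e
  rw [coeff_cs, coeff_cs]
  have step : ∀ d ∈ DF n (deg e),
      MvPowerSeries.coeff d (cs B g) * MvPowerSeries.coeff e (pprod C d)
        = ∑ f ∈ DF n (deg e),
            MvPowerSeries.coeff f g * MvPowerSeries.coeff d (pprod B f) *
              MvPowerSeries.coeff e (pprod C d) := by
    intro d hd
    rw [coeff_cs, Finset.sum_subset (DF_mono (mem_DF.1 hd)) (fun f _ hf => by
      rw [ordGE_pprod hB f d (by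
        by_contra h; push_neg at h; exact hf (mem_DF.2 (by omega))), mul_zero]),
      Finset.sum_mul]
  rw [Finset.sum_congr rfl step, Finset.sum_comm]
  refine Finset.sum_congr rfl fun f _ => ?_
  rw [← cs_pprod hC B f, coeff_cs, Finset.mul_sum]
  exact Finset.sum_congr rfl fun d _ => by ring

lemma pprod_idSys (d : Fin n →₀ ℕ) :
    pprod (idSys : Sys n K) d = MvPowerSeries.monomial d 1 := by
  induction d using Finsupp.induction with
  | zero =>
    rw [pprod_zero]
    apply MvPowerSeries.ext; intro e
    rw [MvPowerSeries.coeff_one, MvPowerSeries.coeff_monomial]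
  | single_add j b f hjf hb ih =>
    rw [pprod_add, ih]
    have hsingle : pprod (idSys : Sys n K) (Finsupp.single j b) = MvPowerSeries.X j ^ b := by
      have h1 : ((Finsupp.single j b).prod fun j' s => (idSys : Sys n K) j' ^ s)
          = (idSys : Sys n K) j ^ b := Finsupp.prod_single_index (pow_zero _)
      unfold pprod
      rw [h1]
      rfl
    rw [hsingle, MvPowerSeries.X_pow_eq, MvPowerSeries.monomial_mul_monomial, one_mul]

lemma cs_idSys (g : MvPowerSeries (Fin n) K) : cs (idSys : Sys n K) g = g := by
  apply MvPowerSeries.ext; intro e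
  rw [coeff_cs]
  rw [Finset.sum_eq_single e]
  · rw [pprod_idSys, MvPowerSeries.coeff_monomial_same, mul_one]
  · intro d _ hd
    rw [pprod_idSys, MvPowerSeries.coeff_monomial_ne hd.symm, mul_zero]
  · intro h
    exact absurd (mem_DF.2 (le_refl _)) h

lemma constantCoeff_idSys (i : Fin n) :
    MvPowerSeries.constantCoeff (σ := Fin n) (R := K) ((idSys : Sys n K) i) = 0 :=
  MvPowerSeries.constantCoeff_X i


-- ### system-level lemmas

lemma coeff_homC (c : ℕ) (φ : Sys n K) (i : Fin n) (e : Fin n →₀ ℕ) :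
    MvPowerSeries.coeff e (homC c φ i)
      = if deg e = c then MvPowerSeries.coeff e (φ i) else 0 := rfl

lemma suppDeg_homC (c : ℕ) (φ : Sys n K) (i : Fin n) : SuppDeg c (homC c φ i) := by
  intro e he
  rw [coeff_homC, if_neg he]

lemma constantCoeff_homC1 (φ : Sys n K) (j : Fin n) :
    MvPowerSeries.constantCoeff (σ := Fin n) (R := K) (homC 1 φ j) = 0 := by
  rw [← MvPowerSeries.coeff_zero_eq_constantCoeff_apply, coeff_homC, if_neg (by
    rw [deg_zero]; omega)]

lemma comp_assoc {A B C : Sys n K}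
    (hB : ∀ j, MvPowerSeries.constantCoeff (σ := Fin n) (R := K) (B j) = 0)
    (hC : ∀ j, MvPowerSeries.constantCoeff (σ := Fin n) (R := K) (C j) = 0) :
    comp (comp A B) C = comp A (comp B C) := by
  have hBC : ∀ j, MvPowerSeries.constantCoeff (σ := Fin n) (R := K) (comp B C j) = 0 := by
    intro j
    rw [comp_eq_cs hC, ← MvPowerSeries.coeff_zero_eq_constantCoeff_apply, coeff_zero_cs,
      MvPowerSeries.coeff_zero_eq_constantCoeff_apply, hB]
  funext i
  have hfun : comp B C = fun j => cs C (B j) := funext fun j => comp_eq_cs hC j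
  rw [comp_eq_cs hC i, comp_eq_cs hBC i, comp_eq_cs hB i, cs_assoc hB hC, hfun]

lemma comp_idSys_right (A : Sys n K) : comp A idSys = A := by
  funext i
  rw [comp_eq_cs constantCoeff_idSys, cs_idSys]

lemma comp_idSys_left {B : Sys n K}
    (hB : ∀ j, MvPowerSeries.constantCoeff (σ := Fin n) (R := K) (B j) = 0) : comp idSys B = B := by
  funext i
  rw [comp_eq_cs hB]
  exact cs_X hB i

lemma constantCoeff_comp {A B : Sys n K}
    (hB : ∀ j, MvPowerSeries.constantCoeff (σ := Fin n) (R := K) (B j) = 0) (i : Fin n)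
    (hA : MvPowerSeries.constantCoeff (σ := Fin n) (R := K) (A i) = 0) :
    MvPowerSeries.constantCoeff (σ := Fin n) (R := K) (comp A B i) = 0 := by
  rw [comp_eq_cs hB, ← MvPowerSeries.coeff_zero_eq_constantCoeff_apply, coeff_zero_cs,
    MvPowerSeries.coeff_zero_eq_constantCoeff_apply, hA]

lemma constantCoeff_iterComp {G : Sys n K}
    (hG : ∀ j, MvPowerSeries.constantCoeff (σ := Fin n) (R := K) (G j) = 0) (m : ℕ) (i : Fin n) :
    MvPowerSeries.constantCoeff (σ := Fin n) (R := K) (iterComp G m i) = 0 := by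
  induction m with
  | zero => exact constantCoeff_idSys i
  | succ m ih => exact constantCoeff_comp hG i ih

lemma suppDeg_comp {a b : ℕ} {A B : Sys n K} (hA : ∀ i, SuppDeg a (A i))
    (hB : ∀ j, SuppDeg b (B j)) (hb : 1 ≤ b) (i : Fin n) : SuppDeg (a * b) (comp A B i) := by
  have hB0 : ∀ j, MvPowerSeries.constantCoeff (σ := Fin n) (R := K) (B j) = 0 := by
    intro j
    rw [← MvPowerSeries.coeff_zero_eq_constantCoeff_apply]
    exact hB j 0 (by rw [deg_zero]; omega)
  intro e he
  rw [comp_eq_cs hB0, coeff_cs]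
  apply Finset.sum_eq_zero
  intro d _
  rcases eq_or_ne (deg d) a with hd | hd
  · rw [suppDeg_pprod hB d e (by rw [hd, Nat.mul_comm]; exact he), mul_zero]
  · rw [hA i d hd, zero_mul]

lemma homC1_comp {A B : Sys n K}
    (hB : ∀ j, MvPowerSeries.constantCoeff (σ := Fin n) (R := K) (B j) = 0) :
    homC 1 (comp A B) = comp (homC 1 A) (homC 1 B) := by
  funext i
  apply MvPowerSeries.ext; intro e
  rw [coeff_homC]
  rcases eq_or_ne (deg e) 1 with he | he
  · rw [if_pos he, comp_eq_cs hB, comp_eq_cs (fun j => constantCoeff_homC1 B j),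
      coeff_cs, coeff_cs]
    refine Finset.sum_congr rfl fun d hd => ?_
    have hdle : deg d ≤ deg e := mem_DF.1 hd
    rcases Nat.eq_zero_or_pos (deg d) with hd0 | hdpos
    · have : d = 0 := (deg_eq_zero_iff d).1 hd0
      subst this
      rw [pprod_zero, pprod_zero, MvPowerSeries.coeff_one, if_neg (by
        intro h; subst h; rw [deg_zero] at he; omega), mul_zero, mul_zero]
    · have hd1 : deg d = 1 := by omega
      obtain ⟨j, rfl⟩ := exists_single_of_deg_one hd1
      rw [pprod_single, pprod_single, coeff_homC, if_pos hd1, coeff_homC, if_pos he]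
  · rw [if_neg he]
    exact (suppDeg_comp (fun i => suppDeg_homC 1 A i) (fun j => suppDeg_homC 1 B j)
      le_rfl i e (by omega)).symm


-- ### congruence-modulo-high-order machinery

/-- `a` and `a'` both have order `≥ s` and agree up to degree `< s + c`. -/
def CM (s c : ℕ) (a a' : MvPowerSeries (Fin n) K) : Prop :=
  OrdGE s a ∧ OrdGE s a' ∧ OrdGE (s + c) (a - a')

lemma OrdGE.zero (s : ℕ) : OrdGE s (0 : MvPowerSeries (Fin n) K) := fun e _ => map_zero _

lemma CM.mul {s t c : ℕ} {a a' b b' : MvPowerSeries (Fin n) K}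
    (ha : CM s c a a') (hb : CM t c b b') : CM (s + t) c (a * b) (a' * b') := by
  obtain ⟨ha1, ha2, ha3⟩ := ha
  obtain ⟨hb1, hb2, hb3⟩ := hb
  refine ⟨ha1.mul hb1, ha2.mul hb2, ?_⟩
  have key : a * b - a' * b' = (a - a') * b + a' * (b - b') := by ring
  rw [key]
  exact ((ha3.mul hb1).mono (by omega)).add ((ha2.mul hb3).mono (by omega))

lemma CM.one (c : ℕ) : CM 0 c (1 : MvPowerSeries (Fin n) K) 1 := by
  refine ⟨OrdGE.one, OrdGE.one, ?_⟩
  rw [sub_self]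
  exact OrdGE.zero _

lemma CM.pow {s c : ℕ} {a a' : MvPowerSeries (Fin n) K} (h : CM s c a a') (m : ℕ) :
    CM (s * m) c (a ^ m) (a' ^ m) := by
  induction m with
  | zero => simpa using CM.one c
  | succ m ih =>
    rw [pow_succ, pow_succ, Nat.mul_succ]
    exact ih.mul h

lemma cm_pprod {c : ℕ} {ψ ψ' : Sys n K} (h : ∀ j, CM 1 c (ψ j) (ψ' j)) (d : Fin n →₀ ℕ) :
    CM (deg d) c (pprod ψ d) (pprod ψ' d) := by
  unfold pprod Finsupp.prod deg Finsupp.sum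
  induction d.support using Finset.cons_induction with
  | empty => simpa using CM.one c
  | cons j s hj ih =>
    rw [Finset.sum_cons, Finset.prod_cons, Finset.prod_cons]
    have := ((h j).pow (d j)).mul ih
    rwa [Nat.one_mul] at this

lemma coeff_eq_of_CM {s c : ℕ} {a a' : MvPowerSeries (Fin n) K} (h : CM s c a a')
    {e : Fin n →₀ ℕ} (he : deg e < s + c) :
    MvPowerSeries.coeff e a = MvPowerSeries.coeff e a' := by
  have := h.2.2 e he
  rw [map_sub, sub_eq_zero] at this
  exact this

-- ### the two key composition lemmas

/-- Perturbing the inner system by a homogeneous degree-`k+1` term changes the coefficients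
up to degree `k+1` exactly by the linear part applied to the perturbation. -/
lemma coeff_comp_perturb {k : ℕ} (hk : 1 ≤ k) {G ψ u : Sys n K}
    (hψ : ∀ j, MvPowerSeries.constantCoeff (σ := Fin n) (R := K) (ψ j) = 0)
    (hu : ∀ j, SuppDeg (k + 1) (u j)) (i : Fin n) (e : Fin n →₀ ℕ) (he : deg e ≤ k + 1) :
    MvPowerSeries.coeff e (comp G (ψ + u) i)
      = MvPowerSeries.coeff e (comp G ψ i)
        + MvPowerSeries.coeff e (comp (homC 1 G) u i) := by
  have hu0 : ∀ j, MvPowerSeries.constantCoeff (σ := Fin n) (R := K) (u j) = 0 := by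
    intro j
    rw [← MvPowerSeries.coeff_zero_eq_constantCoeff_apply]
    exact hu j 0 (by rw [deg_zero]; omega)
  have hψu : ∀ j, MvPowerSeries.constantCoeff (σ := Fin n) (R := K) ((ψ + u) j) = 0 := by
    intro j
    show MvPowerSeries.constantCoeff (σ := Fin n) (R := K) (ψ j + u j) = 0
    rw [map_add, hψ j, hu0 j, add_zero]
  rw [comp_eq_cs hψu, comp_eq_cs hψ, comp_eq_cs hu0, coeff_cs, coeff_cs, coeff_cs,
    ← Finset.sum_add_distrib]
  refine Finset.sum_congr rfl fun d hd => ?_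
  have hdle : deg d ≤ deg e := mem_DF.1 hd
  rcases Nat.lt_or_ge (deg d) 2 with hdlt | hdge
  · rcases Nat.eq_zero_or_pos (deg d) with hd0 | hdpos
    · have : d = 0 := (deg_eq_zero_iff d).1 hd0
      subst this
      rw [pprod_zero, pprod_zero, pprod_zero, coeff_homC, if_neg (by rw [deg_zero]; omega),
        zero_mul, add_zero]
    · have hd1 : deg d = 1 := by omega
      obtain ⟨j, rfl⟩ := exists_single_of_deg_one hd1
      rw [pprod_single, pprod_single, pprod_single, coeff_homC, if_pos hd1]
      show _ * MvPowerSeries.coeff e (ψ j + u j) = _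
      rw [map_add, mul_add]
  · -- `deg d ≥ 2` : the perturbation does not matter in degrees `≤ k + 1`
    have hcm : ∀ j, CM 1 k ((ψ + u) j) (ψ j) := by
      intro j
      refine ⟨OrdGE.of_constantCoeff (hψu j), OrdGE.of_constantCoeff (hψ j), ?_⟩
      have : (ψ + u) j - ψ j = u j := by
        show ψ j + u j - ψ j = u j
        ring
      rw [this]
      intro e' he'
      exact hu j e' (by omega)
    have hpp := cm_pprod hcm d
    rw [coeff_eq_of_CM hpp (by omega), coeff_homC, if_neg (by omega), zero_mul, add_zero]

/-- Composition of a system of order `≥ k+1` with a zero-constant-term system agrees, up to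
degree `k+1`, with the composition of the homogeneous parts. -/
lemma coeff_comp_highOrder {k : ℕ} {D φ : Sys n K}
    (hD : ∀ i e, deg e ≤ k → MvPowerSeries.coeff e (D i) = 0)
    (hφ : ∀ j, MvPowerSeries.constantCoeff (σ := Fin n) (R := K) (φ j) = 0)
    (i : Fin n) (e : Fin n →₀ ℕ) (he : deg e ≤ k + 1) :
    MvPowerSeries.coeff e (comp D φ i)
      = MvPowerSeries.coeff e (comp (homC (k + 1) D) (homC 1 φ) i) := by
  rw [comp_eq_cs hφ, comp_eq_cs (fun j => constantCoeff_homC1 φ j), coeff_cs, coeff_cs]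
  refine Finset.sum_congr rfl fun d hd => ?_
  have hdle : deg d ≤ deg e := mem_DF.1 hd
  rcases Nat.lt_or_ge (deg d) (k + 1) with hdlt | hdge
  · rw [hD i d (by omega), coeff_homC, if_neg (by omega), zero_mul, zero_mul]
  · have hdk : deg d = k + 1 := by omega
    have hcm : ∀ j, CM 1 1 (φ j) (homC 1 φ j) := by
      intro j
      refine ⟨OrdGE.of_constantCoeff (hφ j), (suppDeg_homC 1 φ j).ordGE, ?_⟩
      intro e' he'
      rw [map_sub]
      rcases Nat.eq_zero_or_pos (deg e') with h0 | hpos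
      · have : e' = 0 := (deg_eq_zero_iff e').1 h0
        subst this
        rw [MvPowerSeries.coeff_zero_eq_constantCoeff_apply, hφ j, coeff_homC,
          if_neg (by rw [deg_zero]; omega), sub_zero]
      · have h1 : deg e' = 1 := by omega
        rw [coeff_homC, if_pos h1, sub_self]
    have hpp := cm_pprod hcm d
    rw [coeff_eq_of_CM hpp (by omega), coeff_homC, if_pos hdk]


lemma homC1_idSys : homC 1 (idSys : Sys n K) = idSys := by
  funext i
  apply MvPowerSeries.ext; intro e
  rw [coeff_homC]
  rcases eq_or_ne (deg e) 1 with he | he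
  · rw [if_pos he]
  · rw [if_neg he, (SuppDeg.X i e he).symm]
    rfl

lemma homC1_iterComp {G : Sys n K}
    (hG : ∀ j, MvPowerSeries.constantCoeff (σ := Fin n) (R := K) (G j) = 0) (m : ℕ) :
    homC 1 (iterComp G m) = iterComp (homC 1 G) m := by
  induction m with
  | zero => exact homC1_idSys
  | succ m ih =>
    show homC 1 (comp (iterComp G m) G) = comp (iterComp (homC 1 G) m) (homC 1 G)
    rw [homC1_comp hG, ih]

lemma sysComp_add_left {A B C : Sys n K}
    (hC : ∀ j, MvPowerSeries.constantCoeff (σ := Fin n) (R := K) (C j) = 0) :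
    comp (A + B) C = comp A C + comp B C := by
  funext i
  show comp (A + B) C i = comp A C i + comp B C i
  rw [comp_eq_cs hC, comp_eq_cs hC, comp_eq_cs hC]
  show cs C (A i + B i) = _
  rw [cs_add]

/-- If `φ₀ = 0` with invertible linear part, `u` is homogeneous of degree
`k+1` (with `k ≥ 1`), then for every `m ≥ 1`:
`((φ+u)^m)_{k+1} = (φ^m)_{k+1} + Σ_{i=0}^{m-1} φ₁^i ∘ u ∘ φ₁^{m-1-i}`. -/
theorem perturbation_component_formula
    (n : ℕ) (K : Type) [Field K] (k : ℕ) (hk : 1 ≤ k)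
    (φ : Sys n K) (hφ0 : homC 0 φ = 0) (hinv : IsUnit (jac φ).det)
    (u : Sys n K) (hu : homC (k + 1) u = u) :
    ∀ m : ℕ, 1 ≤ m →
      homC (k + 1) (iterComp (φ + u) m) =
        homC (k + 1) (iterComp φ m) +
          ∑ i ∈ Finset.range m,
            comp (iterComp (homC 1 φ) i) (comp u (iterComp (homC 1 φ) (m - 1 - i))) := by
  classical
  set L : Sys n K := homC 1 φ with hLdef
  set F : Sys n K := φ + u with hFdef
  set S : ℕ → Sys n K := fun m =>
    ∑ x ∈ Finset.range m, comp (iterComp L x) (comp u (iterComp L (m - 1 - x))) with hSdef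
  -- basic constant-coefficient facts
  have hφc : ∀ j, MvPowerSeries.constantCoeff (σ := Fin n) (R := K) (φ j) = 0 := by
    intro j
    have h1 : homC 0 φ j = 0 := congrFun hφ0 j
    have h2 := congrArg (MvPowerSeries.coeff (0 : Fin n →₀ ℕ)) h1
    rw [coeff_homC, if_pos deg_zero, map_zero] at h2
    rw [← MvPowerSeries.coeff_zero_eq_constantCoeff_apply]
    exact h2
  have hus : ∀ j, SuppDeg (k + 1) (u j) := by
    intro j e hne
    have h1 : u j = homC (k + 1) u j := (congrFun hu j).symm
    rw [h1, coeff_homC, if_neg hne]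
  have huc : ∀ j, MvPowerSeries.constantCoeff (σ := Fin n) (R := K) (u j) = 0 := by
    intro j
    rw [← MvPowerSeries.coeff_zero_eq_constantCoeff_apply]
    exact hus j 0 (by rw [deg_zero]; omega)
  have hFc : ∀ j, MvPowerSeries.constantCoeff (σ := Fin n) (R := K) (F j) = 0 := by
    intro j
    show MvPowerSeries.constantCoeff (σ := Fin n) (R := K) (φ j + u j) = 0
    rw [map_add, hφc j, huc j, add_zero]
  have hLc : ∀ j, MvPowerSeries.constantCoeff (σ := Fin n) (R := K) (L j) = 0 :=
    fun j => constantCoeff_homC1 φ j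
  have hLiterc : ∀ m j, MvPowerSeries.constantCoeff (σ := Fin n) (R := K) (iterComp L m j) = 0 :=
    fun m j => constantCoeff_iterComp hLc m j
  have hL1 : homC 1 F = L := by
    funext j
    apply MvPowerSeries.ext; intro e
    rw [coeff_homC, hLdef, coeff_homC]
    rcases eq_or_ne (deg e) 1 with he | he
    · rw [if_pos he, if_pos he]
      show MvPowerSeries.coeff e (φ j + u j) = _
      rw [map_add, hus j e (by omega), add_zero]
    · rw [if_neg he, if_neg he]
  have hLsupp : ∀ m j, SuppDeg 1 (iterComp L m j) := by
    intro m
    induction m with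
    | zero => exact fun j => SuppDeg.X j
    | succ m ih =>
      intro j
      have := suppDeg_comp ih (fun j' => suppDeg_homC 1 φ j') le_rfl j
      rwa [Nat.one_mul] at this
  -- each summand of `S m` is concentrated in degree `k+1`
  have hterm : ∀ x j : ℕ, ∀ i : Fin n,
      SuppDeg (k + 1) (comp (iterComp L x) (comp u (iterComp L j)) i) := by
    intro x j i
    have h2 : ∀ i', SuppDeg (k + 1) (comp u (iterComp L j) i') := by
      intro i'
      have := suppDeg_comp hus (hLsupp j) le_rfl i'
      rwa [Nat.mul_one] at this
    have := suppDeg_comp (hLsupp x) h2 (by omega) i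
    rwa [Nat.one_mul] at this
  have hSsupp : ∀ m i, SuppDeg (k + 1) (S m i) := by
    intro m i e hne
    rw [hSdef]
    show MvPowerSeries.coeff e
      ((∑ x ∈ Finset.range m, comp (iterComp L x) (comp u (iterComp L (m - 1 - x)))) i) = 0
    rw [Finset.sum_apply, map_sum]
    exact Finset.sum_eq_zero fun x _ => hterm x (m - 1 - x) i e hne
  -- the key induction
  have claim : ∀ m : ℕ, ∀ i : Fin n, ∀ e : Fin n →₀ ℕ, deg e ≤ k + 1 →
      MvPowerSeries.coeff e (iterComp F m i)
        = MvPowerSeries.coeff e (iterComp φ m i) + MvPowerSeries.coeff e (S m i) := by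
    intro m
    induction m with
    | zero =>
      intro i e _
      have : S 0 i = 0 := by rw [hSdef]; simp
      rw [this, map_zero, add_zero]
      rfl
    | succ m ih =>
      intro i e he
      show MvPowerSeries.coeff e (comp (iterComp F m) F i) = _
      rw [hFdef, coeff_comp_perturb hk hφc hus i e he]
      have hlin : homC 1 (iterComp F m) = iterComp L m := by
        rw [homC1_iterComp hFc m, hFdef, hL1]
      rw [hlin]
      -- split the first term
      set Dm : Sys n K := iterComp F m - iterComp φ m with hDmdef
      have hFm : iterComp F m = iterComp φ m + Dm := by rw [hDmdef]; abel
      have hDmcoeff : ∀ i' e', deg e' ≤ k + 1 →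
          MvPowerSeries.coeff e' (Dm i') = MvPowerSeries.coeff e' (S m i') := by
        intro i' e' he'
        rw [hDmdef]
        show MvPowerSeries.coeff e' (iterComp F m i' - iterComp φ m i') = _
        rw [map_sub, ih i' e' he']
        ring
      have hDmord : ∀ i' e', deg e' ≤ k → MvPowerSeries.coeff e' (Dm i') = 0 := by
        intro i' e' he'
        rw [hDmcoeff i' e' (by omega)]
        exact hSsupp m i' e' (by omega)
      have hhom : homC (k + 1) Dm = S m := by
        funext i'
        apply MvPowerSeries.ext; intro d
        rw [coeff_homC]
        rcases eq_or_ne (deg d) (k + 1) with hd | hd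
        · rw [if_pos hd, hDmcoeff i' d (by omega)]
        · rw [if_neg hd, (hSsupp m i' d hd).symm]
      have hsplit : MvPowerSeries.coeff e (comp (iterComp F m) φ i)
          = MvPowerSeries.coeff e (iterComp φ (m + 1) i)
            + MvPowerSeries.coeff e (comp (S m) L i) := by
        rw [hFm, sysComp_add_left hφc]
        show MvPowerSeries.coeff e (comp (iterComp φ m) φ i + comp Dm φ i) = _
        rw [map_add, coeff_comp_highOrder hDmord hφc i e he, hhom, ← hLdef]
        rfl
      rw [hsplit]
      -- identify `comp (S m) L` with the shifted sum
      have hSL : ∀ i', comp (S m) L i'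
          = ∑ x ∈ Finset.range m, comp (iterComp L x) (comp u (iterComp L (m - x))) i' := by
        intro i'
        rw [comp_eq_cs hLc]
        rw [hSdef]
        show cs L ((∑ x ∈ Finset.range m,
          comp (iterComp L x) (comp u (iterComp L (m - 1 - x)))) i') = _
        rw [Finset.sum_apply]
        rw [show (cs L : MvPowerSeries (Fin n) K → MvPowerSeries (Fin n) K)
          = (csHom L hLc : MvPowerSeries (Fin n) K →+* MvPowerSeries (Fin n) K) from rfl,
          map_sum]
        refine Finset.sum_congr rfl fun x hx => ?_
        show cs L (comp (iterComp L x) (comp u (iterComp L (m - 1 - x))) i') = _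
        rw [← comp_eq_cs hLc i']
        have hinner : ∀ j', MvPowerSeries.constantCoeff (σ := Fin n) (R := K)
            (comp u (iterComp L (m - 1 - x)) j') = 0 :=
          fun j' => constantCoeff_comp (hLiterc (m - 1 - x)) j' (huc j')
        rw [comp_assoc hinner hLc, comp_assoc (hLiterc (m - 1 - x)) hLc]
        have hidx : m - 1 - x + 1 = m - x := by
          rw [Finset.mem_range] at hx
          omega
        show comp (iterComp L x) (comp u (iterComp L (m - 1 - x + 1))) i' = _
        rw [hidx]
      rw [hSL i]
      -- assemble
      have hSm1 : S (m + 1) i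
          = (∑ x ∈ Finset.range m, comp (iterComp L x) (comp u (iterComp L (m - x))) i)
            + comp (iterComp L m) u i := by
        rw [hSdef]
        show (∑ x ∈ Finset.range (m + 1),
          comp (iterComp L x) (comp u (iterComp L (m + 1 - 1 - x)))) i = _
        rw [Finset.sum_apply, Finset.sum_range_succ]
        have h1 : ∀ x ∈ Finset.range m,
            comp (iterComp L x) (comp u (iterComp L (m + 1 - 1 - x))) i
              = comp (iterComp L x) (comp u (iterComp L (m - x))) i := by
          intro x hx
          rw [Finset.mem_range] at hx
          have hxx : m + 1 - 1 - x = m - x := by omega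
          rw [hxx]
        rw [Finset.sum_congr rfl h1]
        have h2 : m + 1 - 1 - m = 0 := by omega
        rw [h2]
        show _ + comp (iterComp L m) (comp u idSys) i = _
        rw [comp_idSys_right]
      rw [hSm1, map_add, map_sum]
      ring
  -- conclude
  intro m _
  funext i
  apply MvPowerSeries.ext; intro e
  have hrhs : (homC (k + 1) (iterComp φ m) + S m) i
      = homC (k + 1) (iterComp φ m) i + S m i := rfl
  rw [show (homC (k + 1) (iterComp φ m) +
      ∑ i ∈ Finset.range m,
        comp (iterComp (homC 1 φ) i) (comp u (iterComp (homC 1 φ) (m - 1 - i))))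
      = homC (k + 1) (iterComp φ m) + S m from rfl, hrhs, map_add, coeff_homC, coeff_homC]
  rcases eq_or_ne (deg e) (k + 1) with he | he
  · rw [if_pos he, if_pos he, claim m i e (by omega)]
  · rw [if_neg he, if_neg he, hSsupp m i e he, add_zero]
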